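/- Let U ⊆ ℝ^m be open, ψ : U → ℝ be C², F(A) = ψ(P₁(A), …, P_m(A)) and f(κ) = ψ(p₁(κ), …, p_m(κ)). Let A = diag(κ₁,…,κₙ) with (P₁(A),…,P_m(A)) ∈ U and with κ₁,…,κₙ pairwise distinct. Then for every n×n real matrix η, d²F(A)(η,η) = Σ_{i,j=1}^n (∂²f/∂κᵢ∂κⱼ)(κ) · η_{ii} η_{jj} + Σ_{i≠j} ((∂f/∂κᵢ(κ) − ∂f/∂κⱼ(κ))/(κᵢ − κⱼ)) · η_{ij} η_{ji}. -/

import Mathlib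

attribute [local instance] Matrix.normedAddCommGroup Matrix.normedSpace

/-- `P_k(A) = trace (A ^ k)`, bundled as the vector `(P₁(A), …, P_m(A))`. -/
noncomputable def Pvec (n m : ℕ) (A : Matrix (Fin n) (Fin n) ℝ) : Fin m → ℝ :=
  fun l => (A ^ ((l : ℕ) + 1)).trace

/-- `p_k(κ) = ∑ i, κ i ^ k`, bundled as the vector `(p₁(κ), …, p_m(κ))`. -/
def pvec (n m : ℕ) (κ : Fin n → ℝ) : Fin m → ℝ :=
  fun l => ∑ i, κ i ^ ((l : ℕ) + 1)

open Finset Matrix ContinuousLinearMap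

variable {n m : ℕ}

abbrev Mat (n : ℕ) := Matrix (Fin n) (Fin n) ℝ

noncomputable instance instNACGMatCLM : NormedAddCommGroup (Mat n →L[ℝ] Mat n) :=
  ContinuousLinearMap.toNormedAddCommGroup

noncomputable instance instNSMatCLM : NormedSpace ℝ (Mat n →L[ℝ] Mat n) :=
  ContinuousLinearMap.toNormedSpace

noncomputable def mulL (n : ℕ) : Mat n →L[ℝ] Mat n →L[ℝ] Mat n :=
  LinearMap.toContinuousLinearMap
    { toFun := fun X => LinearMap.toContinuousLinearMap (LinearMap.mul ℝ (Mat n) X)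
      map_add' := by intro x y; ext B i j; simp [add_mul]
      map_smul' := by intro c x; ext B i j; simp [smul_mul_assoc] }

@[simp] lemma mulL_apply (X B : Mat n) : mulL n X B = X * B := rfl

noncomputable def powD (n k : ℕ) (X : Mat n) : Mat n →L[ℝ] Mat n :=
  ∑ a ∈ Finset.range k, (mulL n (X ^ a)).comp ((mulL n).flip (X ^ (k - 1 - a)))

lemma powD_apply (k : ℕ) (X B : Mat n) :
    powD n k X B = ∑ a ∈ Finset.range k, X ^ a * B * X ^ (k - 1 - a) := by
  simp only [powD, ContinuousLinearMap.sum_apply]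
  exact Finset.sum_congr rfl fun a _ => (mul_assoc (X ^ a) B (X ^ (k - 1 - a))).symm

lemma hasFDerivAt_matrix_pow (k : ℕ) (X : Mat n) :
    HasFDerivAt (fun Y : Mat n => Y ^ k) (powD n k X) X := by
  induction k with
  | zero =>
      simp only [pow_zero, powD, Finset.range_zero, Finset.sum_empty]
      exact hasFDerivAt_const _ _
  | succ k ih =>
      have hmul : HasFDerivAt (fun Y : Mat n => mulL n (Y ^ k))
          ((mulL n).comp (powD n k X)) X := by
        have hm : HasFDerivAt (mulL n) (mulL n) (X ^ k) := (mulL n).hasFDerivAt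
        exact HasFDerivAt.comp (g := ⇑(mulL n)) (g' := mulL n) (f := fun Y : Mat n => Y ^ k) X hm ih
      have h := hmul.clm_apply (hasFDerivAt_id X)
      have heq : (fun y : Mat n => mulL n (y ^ k) (_root_.id y)) = fun Y : Mat n => Y ^ (k + 1) := by
        funext Y; simp [pow_succ]
      erw [heq] at h
      refine h.congr_fderiv ?_
      apply ContinuousLinearMap.ext
      intro B
      show X ^ k * B + powD n k X B * X = powD n (k + 1) X B
      rw [add_comm, powD_apply, powD_apply]
      rw [Finset.sum_range_succ, Finset.sum_mul]
      congr 1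
      · apply Finset.sum_congr rfl
        intro a ha
        simp only [Finset.mem_range] at ha
        have h1 : k - a = (k - 1 - a) + 1 := by omega
        simp [h1, pow_succ, mul_assoc]
      · simp

lemma contDiff_matrix_pow (k : ℕ) : ContDiff ℝ 2 (fun Y : Mat n => Y ^ k) := by
  induction k with
  | zero => simpa using contDiff_const
  | succ k ih =>
      have h : ContDiff ℝ 2 fun p : Mat n × Mat n => mulL n p.1 p.2 :=
        ((mulL n).isBoundedBilinearMap.contDiff).of_le le_top
      have : ContDiff ℝ 2 fun Y : Mat n => mulL n (Y ^ k) Y :=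
        h.comp (ContDiff.prodMk ih contDiff_id)
      simpa [pow_succ] using this


noncomputable def traceL (n : ℕ) : Mat n →L[ℝ] ℝ :=
  LinearMap.toContinuousLinearMap (Matrix.traceLinearMap (Fin n) ℝ ℝ)

@[simp] lemma traceL_apply (X : Mat n) : traceL n X = X.trace := rfl

noncomputable def DP (n m : ℕ) (X : Mat n) : Mat n →L[ℝ] (Fin m → ℝ) :=
  ContinuousLinearMap.pi fun l => (traceL n).comp (powD n ((l : ℕ) + 1) X)

lemma DP_apply (X B : Mat n) (l : Fin m) :
    DP n m X B l = (powD n ((l : ℕ) + 1) X B).trace := rfl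

lemma hasFDerivAt_Pvec (X : Mat n) : HasFDerivAt (Pvec n m) (DP n m X) X := by
  apply hasFDerivAt_pi''
  intro l
  exact ((traceL n).hasFDerivAt).comp X (hasFDerivAt_matrix_pow _ X)

lemma contDiff_Pvec : ContDiff ℝ 2 (Pvec n m) :=
  contDiff_pi.2 fun l => (traceL n).contDiff.comp (contDiff_matrix_pow _)

noncomputable def Dp (n m : ℕ) (x : Fin n → ℝ) : (Fin n → ℝ) →L[ℝ] (Fin m → ℝ) :=
  ContinuousLinearMap.pi fun l =>
    ∑ i, ((((l : ℕ) + 1 : ℕ) : ℝ) * x i ^ (l : ℕ)) • ContinuousLinearMap.proj i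

lemma Dp_apply (x ζ : Fin n → ℝ) (l : Fin m) :
    Dp n m x ζ l = ∑ i, ((((l : ℕ) + 1 : ℕ) : ℝ) * x i ^ (l : ℕ)) * ζ i := by
  simp [Dp, ContinuousLinearMap.sum_apply]

lemma hasFDerivAt_pvec (x : Fin n → ℝ) : HasFDerivAt (pvec n m) (Dp n m x) x := by
  apply hasFDerivAt_pi''
  intro l
  have : ∀ i : Fin n, HasFDerivAt (fun y : Fin n → ℝ => y i ^ ((l : ℕ) + 1))
      (((((l : ℕ) + 1 : ℕ) : ℝ) * x i ^ (l : ℕ)) •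
        (ContinuousLinearMap.proj i : (Fin n → ℝ) →L[ℝ] ℝ)) x := by
    intro i
    have h1 := (hasDerivAt_pow ((l : ℕ) + 1) (x i)).comp_hasFDerivAt x
      (ContinuousLinearMap.proj i : (Fin n → ℝ) →L[ℝ] ℝ).hasFDerivAt
    simpa [Function.comp_def] using h1
  have h := HasFDerivAt.sum (fun i (_ : i ∈ Finset.univ) => this i)
  convert h using 1
  · funext y; simp [pvec, Finset.sum_apply]
  · apply ContinuousLinearMap.ext; intro ζ; simp [Dp_apply, ContinuousLinearMap.sum_apply]

lemma contDiff_pvec : ContDiff ℝ 2 (pvec n m) := by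
  apply contDiff_pi.2
  intro l
  exact ContDiff.sum fun i _ => ((contDiff_apply ℝ ℝ i).pow _)

lemma Pvec_diagonal (κ : Fin n → ℝ) : Pvec n m (Matrix.diagonal κ) = pvec n m κ := by
  funext l
  simp [Pvec, pvec, Matrix.diagonal_pow, Matrix.trace_diagonal]

lemma key {E : Type*} [NormedAddCommGroup E] [NormedSpace ℝ E]
    {U : Set (Fin m → ℝ)} (hU : IsOpen U) {ψ : (Fin m → ℝ) → ℝ}
    (hψ : ContDiffOn ℝ 2 ψ U) {Φ : E → Fin m → ℝ} (hΦ : ContDiff ℝ 2 Φ)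
    {A : E} (hA : Φ A ∈ U) (ξ ζ : E)
    {w : ℝ → Fin m → ℝ} (hw : ∀ t, fderiv ℝ Φ (A + t • ξ) ζ = w t)
    {w' : Fin m → ℝ} (hw' : HasDerivAt w w' 0) :
    fderiv ℝ (fderiv ℝ (fun x => ψ (Φ x))) A ξ ζ
      = fderiv ℝ (fderiv ℝ ψ) (Φ A) (fderiv ℝ Φ A ξ) (fderiv ℝ Φ A ζ)
        + fderiv ℝ ψ (Φ A) w' := by
  set G : E → ℝ := fun x => ψ (Φ x) with hG
  set V : Set E := Φ ⁻¹' U with hV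
  have hVopen : IsOpen V := hU.preimage hΦ.continuous
  have hAV : A ∈ V := hA
  have hGc : ContDiffOn ℝ 2 G V := hψ.comp hΦ.contDiffOn (fun x hx => hx)
  -- differentiability of fderiv G at A
  have hdG : ContDiffOn ℝ 1 (fderiv ℝ G) V :=
    hGc.fderiv_of_isOpen hVopen (by norm_num)
  have h1 : DifferentiableAt ℝ (fderiv ℝ G) A :=
    ((hdG.differentiableOn one_ne_zero).differentiableAt (hVopen.mem_nhds hAV))
  -- line
  have hline : HasDerivAt (fun t : ℝ => A + t • ξ) ξ 0 := by
    simpa using ((hasDerivAt_id (0 : ℝ)).smul_const ξ).const_add A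
  have hA0 : A + (0 : ℝ) • ξ = A := by simp
  -- step 5/6 : LHS as a 1-d derivative
  have h5 : HasDerivAt (fun t : ℝ => fderiv ℝ G (A + t • ξ))
      (fderiv ℝ (fderiv ℝ G) A ξ) 0 := by
    have := h1.hasFDerivAt.comp_hasDerivAt_of_eq 0 hline (by simp)
    exact this
  have h6 : HasDerivAt (fun t : ℝ => fderiv ℝ G (A + t • ξ) ζ)
      (fderiv ℝ (fderiv ℝ G) A ξ ζ) 0 := by
    have := h5.clm_apply (hasDerivAt_const 0 ζ)
    simpa [hA0] using this
  -- curve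
  have hΦdiff : Differentiable ℝ Φ := hΦ.differentiable (by norm_num)
  have hc : HasDerivAt (fun t : ℝ => Φ (A + t • ξ)) (fderiv ℝ Φ A ξ) 0 := by
    have := (hΦdiff A).hasFDerivAt.comp_hasDerivAt_of_eq 0 hline (by simp)
    exact this
  -- differentiability of fderiv ψ at Φ A
  have hdψ : ContDiffOn ℝ 1 (fderiv ℝ ψ) U := hψ.fderiv_of_isOpen hU (by norm_num)
  have h2 : DifferentiableAt ℝ (fderiv ℝ ψ) (Φ A) :=
    (hdψ.differentiableOn one_ne_zero).differentiableAt (hU.mem_nhds hA)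
  have hu : HasDerivAt (fun t : ℝ => fderiv ℝ ψ (Φ (A + t • ξ)))
      (fderiv ℝ (fderiv ℝ ψ) (Φ A) (fderiv ℝ Φ A ξ)) 0 :=
    h2.hasFDerivAt.comp_hasDerivAt_of_eq 0 hc (by simp)
  have h8 : HasDerivAt (fun t : ℝ => fderiv ℝ ψ (Φ (A + t • ξ)) (w t))
      (fderiv ℝ (fderiv ℝ ψ) (Φ A) (fderiv ℝ Φ A ξ) (fderiv ℝ Φ A ζ)
        + fderiv ℝ ψ (Φ A) w') 0 := by
    have := hu.clm_apply hw'
    rw [← hw 0, hA0] at this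
    simpa [hA0] using this
  -- eventual equality
  have hev : (fun t : ℝ => fderiv ℝ G (A + t • ξ) ζ)
      =ᶠ[nhds (0 : ℝ)] fun t : ℝ => fderiv ℝ ψ (Φ (A + t • ξ)) (w t) := by
    have hcont : Continuous (fun t : ℝ => A + t • ξ) := by fun_prop
    have hmem : (fun t : ℝ => A + t • ξ) ⁻¹' V ∈ nhds (0 : ℝ) := by
      apply (hVopen.preimage hcont).mem_nhds
      simpa [hA0] using hAV
    filter_upwards [hmem] with t ht
    have hx : Φ (A + t • ξ) ∈ U := ht
    have hψd : DifferentiableAt ℝ ψ (Φ (A + t • ξ)) :=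
      (hψ.differentiableOn (by norm_num)).differentiableAt (hU.mem_nhds hx)
    have : fderiv ℝ G (A + t • ξ)
        = (fderiv ℝ ψ (Φ (A + t • ξ))).comp (fderiv ℝ Φ (A + t • ξ)) :=
      fderiv_comp _ hψd (hΦdiff _)
    rw [this]
    simp [hw t]
  have h6' : HasDerivAt (fun t : ℝ => fderiv ℝ G (A + t • ξ) ζ)
      (fderiv ℝ (fderiv ℝ ψ) (Φ A) (fderiv ℝ Φ A ξ) (fderiv ℝ Φ A ζ)
        + fderiv ℝ ψ (Φ A) w') 0 := h8.congr_of_eventuallyEq hev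
  exact h6.unique h6'

lemma trace_d3 (d e : Fin n → ℝ) (B : Mat n) :
    Matrix.trace (Matrix.diagonal d * B * Matrix.diagonal e)
      = ∑ i, d i * B i i * e i := by
  simp only [Matrix.trace, Matrix.diag, Matrix.mul_diagonal, Matrix.diagonal_mul]

lemma trace_d5 (d e f : Fin n → ℝ) (B C : Mat n) :
    Matrix.trace (Matrix.diagonal d * B * Matrix.diagonal e * C * Matrix.diagonal f)
      = ∑ i, ∑ j, d i * B i j * e j * C j i * f i := by
  have hent : ∀ i, (Matrix.diagonal d * B * Matrix.diagonal e * C * Matrix.diagonal f) i i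
      = ∑ j, d i * B i j * e j * C j i * f i := by
    intro i
    rw [Matrix.mul_diagonal, Matrix.mul_apply, Finset.sum_mul]
    apply Finset.sum_congr rfl; intro j _
    rw [Matrix.mul_diagonal, Matrix.diagonal_mul]
  simp only [Matrix.trace, Matrix.diag]
  exact Finset.sum_congr rfl fun i _ => hent i

lemma trace_pow3 (κ : Fin n → ℝ) (p q : ℕ) (B : Mat n) :
    Matrix.trace ((Matrix.diagonal κ) ^ p * B * (Matrix.diagonal κ) ^ q)
      = ∑ i, κ i ^ (p + q) * B i i := by
  rw [Matrix.diagonal_pow, Matrix.diagonal_pow, trace_d3]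
  apply Finset.sum_congr rfl
  intro i _
  simp [pow_add]
  ring

lemma trace_pow5 (κ : Fin n → ℝ) (p q r : ℕ) (B C : Mat n) :
    Matrix.trace ((Matrix.diagonal κ) ^ p * B * (Matrix.diagonal κ) ^ q * C
        * (Matrix.diagonal κ) ^ r)
      = ∑ i, ∑ j, κ i ^ (p + r) * κ j ^ q * (B i j * C j i) := by
  rw [Matrix.diagonal_pow, Matrix.diagonal_pow, Matrix.diagonal_pow, trace_d5]
  apply Finset.sum_congr rfl; intro i _
  apply Finset.sum_congr rfl; intro j _
  simp [pow_add]
  ring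

lemma count_sum (g : ℕ → ℝ) (N : ℕ) :
    ∑ a ∈ Finset.range (N + 1), ∑ c ∈ Finset.range a, g c
      = ∑ c ∈ Finset.range N, ((N : ℝ) - (c : ℝ)) * g c := by
  induction N with
  | zero => simp
  | succ N ih =>
      rw [Finset.sum_range_succ, ih]
      have h1 : ∑ c ∈ Finset.range (N + 1), (((N + 1 : ℕ) : ℝ) - (c : ℝ)) * g c
          = (∑ c ∈ Finset.range N, ((N : ℝ) - (c : ℝ)) * g c)
            + ∑ c ∈ Finset.range (N + 1), g c := by
        rw [Finset.sum_range_succ, Finset.sum_range_succ, ← add_assoc, ← Finset.sum_add_distrib]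
        push_cast
        congr 1
        · apply Finset.sum_congr rfl; intro c _; ring
        · ring
      rw [h1]

noncomputable def Tfun (l : ℕ) (x y : ℝ) : ℝ :=
  ∑ a ∈ Finset.range (l + 1),
    ((∑ a1 ∈ Finset.range a, x ^ (a1 + (l - a)) * y ^ (a - 1 - a1))
      + ∑ b1 ∈ Finset.range (l - a), x ^ (a + (l - a - 1 - b1)) * y ^ b1)

lemma TP (l : ℕ) (x y : ℝ) :
    Tfun l x y = 2 * ∑ c ∈ Finset.range l, ((l : ℝ) - (c : ℝ)) * (x ^ (l - 1 - c) * y ^ c) := by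
  have hP1 : ∀ a ∈ Finset.range (l + 1),
      (∑ a1 ∈ Finset.range a, x ^ (a1 + (l - a)) * y ^ (a - 1 - a1))
        = ∑ c ∈ Finset.range a, x ^ (l - 1 - c) * y ^ c := by
    intro a ha
    simp only [Finset.mem_range] at ha
    rw [← Finset.sum_range_reflect (fun c => x ^ (l - 1 - c) * y ^ c) a]
    apply Finset.sum_congr rfl
    intro a1 h1
    simp only [Finset.mem_range] at h1
    congr 2
    omega
  have hP2 : ∀ a ∈ Finset.range (l + 1),
      (∑ b1 ∈ Finset.range (l - a), x ^ (a + (l - a - 1 - b1)) * y ^ b1)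
        = ∑ c ∈ Finset.range (l - a), x ^ (l - 1 - c) * y ^ c := by
    intro a ha
    simp only [Finset.mem_range] at ha
    apply Finset.sum_congr rfl
    intro b1 h1
    simp only [Finset.mem_range] at h1
    congr 2
    omega
  have hP2' : ∑ a ∈ Finset.range (l + 1), ∑ c ∈ Finset.range (l - a),
        x ^ (l - 1 - c) * y ^ c
      = ∑ a ∈ Finset.range (l + 1), ∑ c ∈ Finset.range a, x ^ (l - 1 - c) * y ^ c := by
    rw [← Finset.sum_range_reflect
      (fun a => ∑ c ∈ Finset.range a, x ^ (l - 1 - c) * y ^ c) (l + 1)]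
    exact Finset.sum_congr rfl
      (fun a _ => by rw [show l + 1 - 1 - a = l - a from by omega])
  unfold Tfun
  rw [Finset.sum_congr rfl (fun a ha => by rw [hP1 a ha, hP2 a ha])]
  rw [Finset.sum_add_distrib, hP2', count_sum]
  ring

lemma SYM (l : ℕ) (x y : ℝ) :
    Tfun l x y + Tfun l y x
      = 2 * ((l : ℝ) + 1) * ∑ c ∈ Finset.range l, x ^ (l - 1 - c) * y ^ c := by
  rw [TP, TP]
  have h2 : ∑ c ∈ Finset.range l, ((l : ℝ) - (c : ℝ)) * (y ^ (l - 1 - c) * x ^ c)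
      = ∑ c ∈ Finset.range l, ((c : ℝ) + 1) * (x ^ (l - 1 - c) * y ^ c) := by
    rw [← Finset.sum_range_reflect
      (fun c => ((l : ℝ) - (c : ℝ)) * (y ^ (l - 1 - c) * x ^ c)) l]
    apply Finset.sum_congr rfl
    intro c hc
    simp only [Finset.mem_range] at hc
    have e1 : l - 1 - (l - 1 - c) = c := by omega
    have e2 : ((l - 1 - c : ℕ) : ℝ) = (l : ℝ) - 1 - (c : ℝ) := by
      have : (l - 1 - c : ℕ) = l - (c + 1) := by omega
      rw [this, Nat.cast_sub (by omega)]
      push_cast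
      ring
    rw [e1, e2]
    ring
  rw [h2, ← mul_add, ← Finset.sum_add_distrib, mul_assoc, Finset.mul_sum, Finset.mul_sum,
    Finset.mul_sum]
  apply Finset.sum_congr rfl
  intro c _
  ring

lemma Gdiag (l : ℕ) (x : ℝ) :
    ∑ c ∈ Finset.range l, x ^ (l - 1 - c) * x ^ c = (l : ℝ) * x ^ (l - 1) := by
  have h : ∀ c ∈ Finset.range l, x ^ (l - 1 - c) * x ^ c = x ^ (l - 1) := by
    intro c hc
    simp only [Finset.mem_range] at hc
    rw [← pow_add]
    congr 1
    omega
  rw [Finset.sum_congr rfl h, Finset.sum_const, Finset.card_range, nsmul_eq_mul]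

lemma Gne (l : ℕ) (x y : ℝ) (hxy : x ≠ y) :
    ((l : ℝ) + 1) * ∑ c ∈ Finset.range l, x ^ (l - 1 - c) * y ^ c
      = (((l : ℝ) + 1) * x ^ l - ((l : ℝ) + 1) * y ^ l) / (x - y) := by
  have hgeom : (∑ c ∈ Finset.range l, x ^ (l - 1 - c) * y ^ c) * (x - y)
      = x ^ l - y ^ l := by
    have := geom_sum₂_mul x y l
    rw [← this]
    congr 1
    rw [← Finset.sum_range_reflect (fun c => x ^ c * y ^ (l - 1 - c)) l]
    apply Finset.sum_congr rfl
    intro c hc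
    simp only [Finset.mem_range] at hc
    congr 2
    omega
  have hs : x - y ≠ 0 := sub_ne_zero.2 hxy
  rw [eq_div_iff hs]
  linear_combination ((l : ℝ) + 1) * hgeom

lemma W'_eq (κ : Fin n → ℝ) (η : Mat n) (L : ℕ) :
    ∑ a ∈ Finset.range (L + 1),
        (((powD n a (Matrix.diagonal κ) η) * η * (Matrix.diagonal κ) ^ (L - a)).trace
          + ((Matrix.diagonal κ) ^ a * η * (powD n (L - a) (Matrix.diagonal κ) η)).trace)
      = ∑ i, ∑ j, (η i j * η j i) * Tfun L (κ i) (κ j) := by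
  set A := Matrix.diagonal κ with hAdef
  have ht1 : ∀ a : ℕ, (powD n a A η * η * A ^ (L - a)).trace
      = ∑ i, ∑ j, (η i j * η j i)
          * ∑ a1 ∈ Finset.range a, κ i ^ (a1 + (L - a)) * κ j ^ (a - 1 - a1) := by
    intro a
    have hm : powD n a A η * η * A ^ (L - a)
        = ∑ a1 ∈ Finset.range a, A ^ a1 * η * A ^ (a - 1 - a1) * η * A ^ (L - a) := by
      rw [powD_apply, Finset.sum_mul, Finset.sum_mul]
    rw [hm, Matrix.trace_sum]
    rw [Finset.sum_congr rfl (fun a1 _ => trace_pow5 κ a1 (a - 1 - a1) (L - a) η η)]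
    rw [Finset.sum_comm]
    apply Finset.sum_congr rfl; intro i _
    rw [Finset.sum_comm]
    apply Finset.sum_congr rfl; intro j _
    rw [Finset.mul_sum]
    apply Finset.sum_congr rfl; intro a1 _
    ring
  have ht2 : ∀ a : ℕ, (A ^ a * η * powD n (L - a) A η).trace
      = ∑ i, ∑ j, (η i j * η j i)
          * ∑ b1 ∈ Finset.range (L - a), κ i ^ (a + (L - a - 1 - b1)) * κ j ^ b1 := by
    intro a
    have hm : A ^ a * η * powD n (L - a) A η
        = ∑ b1 ∈ Finset.range (L - a), A ^ a * η * A ^ b1 * η * A ^ (L - a - 1 - b1) := by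
      rw [powD_apply, Finset.mul_sum]
      exact Finset.sum_congr rfl (fun b1 _ => by simp only [mul_assoc])
    rw [hm, Matrix.trace_sum]
    rw [Finset.sum_congr rfl (fun b1 _ => trace_pow5 κ a b1 (L - a - 1 - b1) η η)]
    rw [Finset.sum_comm]
    apply Finset.sum_congr rfl; intro i _
    rw [Finset.sum_comm]
    apply Finset.sum_congr rfl; intro j _
    rw [Finset.mul_sum]
    apply Finset.sum_congr rfl; intro b1 _
    ring
  rw [Finset.sum_congr rfl (fun a _ => by rw [ht1 a, ht2 a])]
  rw [Finset.sum_add_distrib]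
  rw [Finset.sum_comm (γ := ℕ)]
  conv_lhs =>
    rw [show (∑ a ∈ Finset.range (L + 1), ∑ i : Fin n, ∑ j : Fin n, (η i j * η j i)
        * ∑ b1 ∈ Finset.range (L - a), κ i ^ (a + (L - a - 1 - b1)) * κ j ^ b1)
      = ∑ i : Fin n, ∑ a ∈ Finset.range (L + 1), ∑ j : Fin n, (η i j * η j i)
        * ∑ b1 ∈ Finset.range (L - a), κ i ^ (a + (L - a - 1 - b1)) * κ j ^ b1
      from Finset.sum_comm]
  rw [← Finset.sum_add_distrib]
  apply Finset.sum_congr rfl; intro i _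
  rw [Finset.sum_comm (γ := ℕ)]
  conv_lhs =>
    rw [show (∑ a ∈ Finset.range (L + 1), ∑ j : Fin n, (η i j * η j i)
        * ∑ b1 ∈ Finset.range (L - a), κ i ^ (a + (L - a - 1 - b1)) * κ j ^ b1)
      = ∑ j : Fin n, ∑ a ∈ Finset.range (L + 1), (η i j * η j i)
        * ∑ b1 ∈ Finset.range (L - a), κ i ^ (a + (L - a - 1 - b1)) * κ j ^ b1
      from Finset.sum_comm]
  rw [← Finset.sum_add_distrib]
  apply Finset.sum_congr rfl; intro j _
  unfold Tfun
  rw [Finset.mul_sum, ← Finset.sum_add_distrib]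
  apply Finset.sum_congr rfl; intro a _
  ring

lemma sum_T_eq (κ : Fin n → ℝ) (η : Mat n) (L : ℕ) :
    ∑ i, ∑ j, (η i j * η j i) * Tfun L (κ i) (κ j)
      = ∑ i, ∑ j, (η i j * η j i)
          * (((L : ℝ) + 1) * ∑ c ∈ Finset.range L, κ i ^ (L - 1 - c) * κ j ^ c) := by
  have hswap : ∑ i, ∑ j, (η i j * η j i) * Tfun L (κ i) (κ j)
      = ∑ i, ∑ j, (η i j * η j i) * Tfun L (κ j) (κ i) := by
    rw [Finset.sum_comm]
    apply Finset.sum_congr rfl; intro i _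
    apply Finset.sum_congr rfl; intro j _
    ring_nf
  have h2 : (∑ i, ∑ j, (η i j * η j i) * Tfun L (κ i) (κ j)) * 2
      = ∑ i, ∑ j, (η i j * η j i)
          * (2 * ((L : ℝ) + 1) * ∑ c ∈ Finset.range L, κ i ^ (L - 1 - c) * κ j ^ c) := by
    rw [mul_two]
    nth_rewrite 2 [hswap]
    rw [← Finset.sum_add_distrib]
    apply Finset.sum_congr rfl; intro i _
    rw [← Finset.sum_add_distrib]
    apply Finset.sum_congr rfl; intro j _
    rw [← mul_add, SYM]
  have h3 : (∑ i, ∑ j, (η i j * η j i)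
        * (((L : ℝ) + 1) * ∑ c ∈ Finset.range L, κ i ^ (L - 1 - c) * κ j ^ c)) * 2
      = ∑ i, ∑ j, (η i j * η j i)
          * (2 * ((L : ℝ) + 1) * ∑ c ∈ Finset.range L, κ i ^ (L - 1 - c) * κ j ^ c) := by
    rw [Finset.sum_mul]
    apply Finset.sum_congr rfl; intro i _
    rw [Finset.sum_mul]
    apply Finset.sum_congr rfl; intro j _
    ring
  exact mul_right_cancel₀ two_ne_zero (h2.trans h3.symm)

lemma hasDerivAt_matmul {f g : ℝ → Mat n} {f' g' : Mat n} {t : ℝ}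
    (hf : HasDerivAt f f' t) (hg : HasDerivAt g g' t) :
    HasDerivAt (fun s => f s * g s) (f' * g t + f t * g') t := by
  have h1 : HasDerivAt (fun s : ℝ => mulL n (f s)) (mulL n f') t :=
    by have hm : HasFDerivAt (mulL n) (mulL n) (f t) := (mulL n).hasFDerivAt
       exact HasFDerivAt.comp_hasDerivAt (l := ⇑(mulL n)) (l' := mulL n) (f := f) t hm hf
  have := h1.clm_apply hg
  exact this

lemma hasDerivAt_line (A η : Mat n) : HasDerivAt (fun t : ℝ => A + t • η) η 0 := by
  exact (((hasDerivAt_id (0 : ℝ)).smul_const η).const_add A).congr_deriv (one_smul ℝ η)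

lemma hasDerivAt_Mpow (a : ℕ) (A η : Mat n) :
    HasDerivAt (fun t : ℝ => (A + t • η) ^ a) (powD n a A η) 0 := by
  have := (hasFDerivAt_matrix_pow a A).comp_hasDerivAt_of_eq 0 (hasDerivAt_line A η)
    (by simp)
  exact this

noncomputable def Wfun (m : ℕ) (A η : Mat n) : ℝ → (Fin m → ℝ) :=
  fun t l => ((powD n ((l : ℕ) + 1) (A + t • η)) η).trace

noncomputable def Wd (m : ℕ) (A η : Mat n) : Fin m → ℝ := fun l =>
  ∑ a ∈ Finset.range ((l : ℕ) + 1),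
    ((powD n a A η * η * A ^ ((l : ℕ) - a)).trace
      + (A ^ a * η * powD n ((l : ℕ) - a) A η).trace)

lemma fderiv_Pvec_line (A η : Mat n) (t : ℝ) :
    fderiv ℝ (Pvec n m) (A + t • η) η = Wfun m A η t := by
  rw [(hasFDerivAt_Pvec _).fderiv]
  rfl

lemma hasDerivAt_Wfun (A η : Mat n) : HasDerivAt (Wfun m A η) (Wd m A η) 0 := by
  apply hasDerivAt_pi.2
  intro l
  have hcomp : (fun t => Wfun m A η t l)
      = fun t => ∑ a ∈ Finset.range ((l : ℕ) + 1),
          ((A + t • η) ^ a * η * (A + t • η) ^ ((l : ℕ) - a)).trace := by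
    funext t
    simp only [Wfun, powD_apply, Nat.add_sub_cancel]
    rw [← Matrix.trace_sum]
  rw [hcomp]
  apply HasDerivAt.fun_sum
  intro a _
  have h1 : HasDerivAt (fun t : ℝ => (A + t • η) ^ a * η) (powD n a A η * η) 0 := by
    have := hasDerivAt_matmul (hasDerivAt_Mpow a A η) (hasDerivAt_const (0 : ℝ) η)
    simpa using this
  have h2 : HasDerivAt (fun t : ℝ => (A + t • η) ^ a * η * (A + t • η) ^ ((l : ℕ) - a))
      (powD n a A η * η * A ^ ((l : ℕ) - a) + A ^ a * η * powD n ((l : ℕ) - a) A η) 0 := by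
    have := hasDerivAt_matmul h1 (hasDerivAt_Mpow ((l : ℕ) - a) A η)
    simpa using this
  have h3 := (traceL n).hasFDerivAt.comp_hasDerivAt 0 h2
  exact h3.congr_deriv (Matrix.trace_add (powD n a A η * η * A ^ ((l : ℕ) - a))
    (A ^ a * η * powD n ((l : ℕ) - a) A η))

lemma Dp_single (κ : Fin n → ℝ) (i : Fin n) (l : Fin m) :
    Dp n m κ (Pi.single i 1) l = (((l : ℕ) + 1 : ℕ) : ℝ) * κ i ^ (l : ℕ) := by
  rw [Dp_apply]
  rw [Finset.sum_eq_single i (fun s _ hs => by rw [Pi.single_eq_of_ne hs, mul_zero])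
    (fun h => absurd (Finset.mem_univ i) h)]
  rw [Pi.single_eq_same, mul_one]

noncomputable def wfun (m : ℕ) (κ : Fin n → ℝ) (i j : Fin n) : ℝ → (Fin m → ℝ) :=
  fun t l => (((l : ℕ) + 1 : ℕ) : ℝ) * (κ j + t * (Pi.single i 1 : Fin n → ℝ) j) ^ (l : ℕ)

noncomputable def wd (m : ℕ) (κ : Fin n → ℝ) (i j : Fin n) : Fin m → ℝ :=
  fun l => (((l : ℕ) + 1 : ℕ) : ℝ)
    * (((l : ℕ) : ℝ) * κ j ^ ((l : ℕ) - 1) * (Pi.single i 1 : Fin n → ℝ) j)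

lemma fderiv_pvec_line (κ : Fin n → ℝ) (i j : Fin n) (t : ℝ) :
    fderiv ℝ (pvec n m) (κ + t • (Pi.single i 1 : Fin n → ℝ)) (Pi.single j 1 : Fin n → ℝ) = wfun m κ i j t := by
  rw [(hasFDerivAt_pvec _).fderiv]
  funext l
  rw [Dp_apply]
  rw [Finset.sum_eq_single j (fun s _ hs => by rw [Pi.single_eq_of_ne hs, mul_zero])
    (fun h => absurd (Finset.mem_univ j) h)]
  rw [Pi.single_eq_same, mul_one]
  simp only [wfun, Pi.add_apply, Pi.smul_apply, smul_eq_mul]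

lemma hasDerivAt_wfun (κ : Fin n → ℝ) (i j : Fin n) :
    HasDerivAt (wfun m κ i j) (wd m κ i j) 0 := by
  apply hasDerivAt_pi.2
  intro l
  have hb : HasDerivAt (fun t : ℝ => κ j + t * (Pi.single i 1 : Fin n → ℝ) j)
      ((Pi.single i 1 : Fin n → ℝ) j) 0 := by
    simpa using ((hasDerivAt_id (0 : ℝ)).mul_const ((Pi.single i 1 : Fin n → ℝ) j)).const_add (κ j)
  have hp := (hb.pow (l : ℕ)).const_mul ((((l : ℕ) + 1 : ℕ)) : ℝ)
  simpa [wfun, wd, mul_assoc] using hp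

lemma DP_diag_eq (κ : Fin n → ℝ) (η : Mat n) :
    DP n m (Matrix.diagonal κ) η = ∑ i, η i i • Dp n m κ (Pi.single i 1) := by
  funext l
  have h1 : (DP n m (Matrix.diagonal κ) η) l
      = ∑ a ∈ Finset.range ((l : ℕ) + 1), ∑ i, κ i ^ (l : ℕ) * η i i := by
    rw [DP_apply, powD_apply, Matrix.trace_sum]
    apply Finset.sum_congr rfl
    intro a ha
    simp only [Finset.mem_range] at ha
    rw [trace_pow3]
    apply Finset.sum_congr rfl; intro i _
    rw [show a + ((l : ℕ) + 1 - 1 - a) = (l : ℕ) from by omega]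
  rw [h1, Finset.sum_comm]
  simp only [Finset.sum_apply, Pi.smul_apply, smul_eq_mul, Dp_single]
  apply Finset.sum_congr rfl; intro i _
  rw [Finset.sum_const, Finset.card_range, nsmul_eq_mul]
  push_cast
  ring

noncomputable def dvk (n m : ℕ) (κ : Fin n → ℝ) (i j : Fin n) : Fin m → ℝ :=
  if i = j then (fun l => (((l : ℕ) + 1 : ℕ) : ℝ) * (((l : ℕ) : ℝ) * κ i ^ ((l : ℕ) - 1)))
  else (κ i - κ j)⁻¹ • (Dp n m κ (Pi.single i 1) - Dp n m κ (Pi.single j 1))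

lemma Wd_diag_eq (κ : Fin n → ℝ) (hκ : Function.Injective κ) (η : Mat n) :
    Wd m (Matrix.diagonal κ) η = ∑ i, ∑ j, (η i j * η j i) • dvk n m κ i j := by
  funext l
  have h1 : Wd m (Matrix.diagonal κ) η l
      = ∑ i, ∑ j, (η i j * η j i)
          * (((l : ℕ) : ℝ) + 1) * ∑ c ∈ Finset.range (l : ℕ), κ i ^ ((l : ℕ) - 1 - c) * κ j ^ c := by
    rw [show Wd m (Matrix.diagonal κ) η l
        = ∑ a ∈ Finset.range ((l : ℕ) + 1),
          (((powD n a (Matrix.diagonal κ) η) * η * (Matrix.diagonal κ) ^ ((l : ℕ) - a)).trace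
            + ((Matrix.diagonal κ) ^ a * η * (powD n ((l : ℕ) - a) (Matrix.diagonal κ) η)).trace)
        from rfl]
    rw [W'_eq κ η (l : ℕ), sum_T_eq κ η (l : ℕ)]
    apply Finset.sum_congr rfl; intro i _
    apply Finset.sum_congr rfl; intro j _
    ring
  rw [h1]
  simp only [Finset.sum_apply, Pi.smul_apply, smul_eq_mul]
  apply Finset.sum_congr rfl; intro i _
  apply Finset.sum_congr rfl; intro j _
  by_cases h : i = j
  · subst h
    rw [show dvk n m κ i i = (fun l : Fin m => (((l : ℕ) + 1 : ℕ) : ℝ)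
        * (((l : ℕ) : ℝ) * κ i ^ ((l : ℕ) - 1))) from if_pos rfl]
    rw [mul_assoc, Gdiag]
    push_cast
    ring
  · rw [show dvk n m κ i j = (κ i - κ j)⁻¹
        • (Dp n m κ (Pi.single i 1) - Dp n m κ (Pi.single j 1)) from if_neg h]
    have hxy : κ i ≠ κ j := fun he => h (hκ he)
    rw [mul_assoc, Gne (l : ℕ) (κ i) (κ j) hxy]
    simp only [Pi.smul_apply, Pi.sub_apply, smul_eq_mul, Dp_single]
    rw [div_eq_inv_mul]
    push_cast
    ring

lemma fin_sum_lemma (a b c : Fin n → Fin n → ℝ) (e : Fin n → ℝ) (κ : Fin n → ℝ)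
    (η : Mat n)
    (hbc : ∀ i, b i i = c i i) (hc0 : ∀ i j, i ≠ j → c i j = 0)
    (hb : ∀ i j, i ≠ j → b i j = (e i - e j) / (κ i - κ j)) :
    (∑ x, η x x * ∑ y, η y y * a y x) + (∑ x, ∑ y, η x y * η y x * b x y)
      = (∑ i, ∑ j, (a i j + c i j) * η i i * η j j)
        + ∑ i, ∑ j, (if i = j then 0
            else (e i - e j) / (κ i - κ j) * η i j * η j i) := by
  have e1 : (∑ x, η x x * ∑ y, η y y * a y x)
      = ∑ i, ∑ j, η j j * (η i i * a i j) := by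
    simp only [Finset.mul_sum]
    rw [Finset.sum_comm]
  rw [e1]
  calc (∑ i : Fin n, ∑ j : Fin n, η j j * (η i i * a i j))
        + ∑ x : Fin n, ∑ y : Fin n, η x y * η y x * b x y
      = ∑ i : Fin n, ∑ j : Fin n,
          (η j j * (η i i * a i j) + η i j * η j i * b i j) := by
        rw [← Finset.sum_add_distrib]
        apply Finset.sum_congr rfl; intro i _
        rw [← Finset.sum_add_distrib]
    _ = ∑ i : Fin n, ∑ j : Fin n, ((a i j + c i j) * η i i * η j j
          + (if i = j then 0 else (e i - e j) / (κ i - κ j) * η i j * η j i)) := by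
        apply Finset.sum_congr rfl; intro i _
        apply Finset.sum_congr rfl; intro j _
        by_cases h : i = j
        · subst h
          rw [hbc i, if_pos rfl]
          ring
        · rw [hb i j h, hc0 i j h, if_neg h]
          ring
    _ = _ := by
        rw [Finset.sum_congr rfl (fun i (_ : i ∈ Finset.univ) => Finset.sum_add_distrib),
          Finset.sum_add_distrib]

/-- Let `ψ` be `C²` on the open `U ⊆ ℝ^m`, `F(A) = ψ(P₁(A),…,P_m(A))`,
`f(κ) = ψ(p₁(κ),…,p_m(κ))`, and `A = diagonal κ` with `(P₁(A),…,P_m(A)) ∈ U` and the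
`κᵢ` pairwise distinct. Then for every matrix `η`,
`d²F(A)(η,η) = ∑_{i,j} ∂²f/∂κᵢ∂κⱼ(κ) ηᵢᵢ ηⱼⱼ
  + ∑_{i≠j} ((∂f/∂κᵢ(κ) - ∂f/∂κⱼ(κ))/(κᵢ - κⱼ)) ηᵢⱼ ηⱼᵢ`. -/
theorem stmt_7 (n m : ℕ) (U : Set (Fin m → ℝ)) (hU : IsOpen U)
    (ψ : (Fin m → ℝ) → ℝ) (hψ : ContDiffOn ℝ 2 ψ U)
    (κ : Fin n → ℝ) (hκdist : Function.Injective κ)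
    (hA : Pvec n m (Matrix.diagonal κ) ∈ U)
    (η : Matrix (Fin n) (Fin n) ℝ) :
    fderiv ℝ (fderiv ℝ (fun X : Matrix (Fin n) (Fin n) ℝ => ψ (Pvec n m X)))
        (Matrix.diagonal κ) η η
      = (∑ i, ∑ j,
          fderiv ℝ (fderiv ℝ (fun x : Fin n → ℝ => ψ (pvec n m x))) κ
              (Pi.single i 1) (Pi.single j 1) * η i i * η j j)
        + ∑ i, ∑ j,
            if i = j then 0 else
              (fderiv ℝ (fun x : Fin n → ℝ => ψ (pvec n m x)) κ (Pi.single i 1)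
                - fderiv ℝ (fun x : Fin n → ℝ => ψ (pvec n m x)) κ (Pi.single j 1))
              / (κ i - κ j) * η i j * η j i := by
  classical
  have hupv : pvec n m κ = Pvec n m (Matrix.diagonal κ) := (Pvec_diagonal κ).symm
  have hκU : pvec n m κ ∈ U := by rw [hupv]; exact hA
  have hkey1 := key hU hψ contDiff_Pvec hA η η (fderiv_Pvec_line (Matrix.diagonal κ) η)
    (hasDerivAt_Wfun (Matrix.diagonal κ) η)
  erw [(hasFDerivAt_Pvec (Matrix.diagonal κ)).fderiv] at hkey1
  have hkey2 : ∀ i j : Fin n,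
      fderiv ℝ (fderiv ℝ (fun x : Fin n → ℝ => ψ (pvec n m x))) κ
          (Pi.single i 1) (Pi.single j 1)
        = fderiv ℝ (fderiv ℝ ψ) (Pvec n m (Matrix.diagonal κ))
            (Dp n m κ (Pi.single i 1)) (Dp n m κ (Pi.single j 1))
          + fderiv ℝ ψ (Pvec n m (Matrix.diagonal κ)) (wd m κ i j) := by
    intro i j
    have h := key hU hψ contDiff_pvec hκU (Pi.single i 1) (Pi.single j 1)
      (fderiv_pvec_line κ i j) (hasDerivAt_wfun κ i j)
    rw [(hasFDerivAt_pvec κ).fderiv, hupv] at h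
    exact h
  have hψd : DifferentiableAt ℝ ψ (Pvec n m (Matrix.diagonal κ)) :=
    (hψ.differentiableOn (by norm_num)).differentiableAt (hU.mem_nhds hA)
  have hfd : ∀ i : Fin n,
      fderiv ℝ (fun x : Fin n → ℝ => ψ (pvec n m x)) κ (Pi.single i 1)
        = fderiv ℝ ψ (Pvec n m (Matrix.diagonal κ)) (Dp n m κ (Pi.single i 1)) := by
    intro i
    have hcomp : fderiv ℝ (ψ ∘ pvec n m) κ
        = (fderiv ℝ ψ (pvec n m κ)).comp (fderiv ℝ (pvec n m) κ) :=
      fderiv_comp κ (by rw [hupv]; exact hψd) (hasFDerivAt_pvec κ).differentiableAt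
    have hfn : (fun x : Fin n → ℝ => ψ (pvec n m x)) = ψ ∘ pvec n m := rfl
    rw [hfn, hcomp, hupv]
    simp only [ContinuousLinearMap.comp_apply, (hasFDerivAt_pvec κ).fderiv]
  refine hkey1.trans ?_
  simp only [hkey2, hfd]
  erw [DP_diag_eq κ η, Wd_diag_eq κ hκdist η]
  simp only [map_sum, _root_.map_smul, ContinuousLinearMap.sum_apply,
    ContinuousLinearMap.smul_apply, smul_eq_mul]
  apply fin_sum_lemma
  · intro i
    congr 1
    funext l
    simp [dvk, wd, Pi.single_eq_same]
  · intro i j hij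
    have : wd m κ i j = 0 := by
      funext l
      simp [wd, Pi.single_eq_of_ne (Ne.symm hij)]
    rw [this, map_zero]
  · intro i j hij
    rw [show dvk n m κ i j = (κ i - κ j)⁻¹
        • (Dp n m κ (Pi.single i 1) - Dp n m κ (Pi.single j 1)) from if_neg hij]
    rw [_root_.map_smul, map_sub, smul_eq_mul, div_eq_inv_mul]
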